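/- Let g : [0,1] → ℝ be continuously differentiable and let f be holomorphic on the open unit disk 𝔻 with ∫_𝔻 |f′(z)|² dA(z) = π. Then ∫_𝔻 g(|z|)² |f′(z)|² dA(z) − ∫_𝔻 g(|z|)² dA(z) = ∫₀¹ 2 g(r) g′(r) · ( π r² − ∫_{D(r)} |f′(z)|² dA(z) ) dr. -/

import Mathlib

open MeasureTheory Metric Set intervalIntegral
open scoped Real

lemma key_radial (G φ : ℝ → ℝ) (hG : Continuous G) (hφ : Continuous φ)
    (CG : ℝ) (hCG : ∀ x, |G x| ≤ CG) (C : ℝ) (hC : ∀ x, |φ x| ≤ C)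
    (hd : ∀ x ∈ Ioo (0:ℝ) 1, HasDerivAt G (φ x) x)
    (h : ℂ → ℝ) (hc : ContinuousOn h (ball (0:ℂ) 1))
    (hint : IntegrableOn h (ball (0:ℂ) 1)) :
    (∫ z in ball (0:ℂ) 1, G (‖z‖) * h z)
      = G 1 * (∫ z in ball (0:ℂ) 1, h z)
        - ∫ r in Ioc (0:ℝ) 1, φ r * ∫ z in ball (0:ℂ) r, h z := by
  have ftc : ∀ a ∈ Icc (0:ℝ) 1, (∫ r in Ioc a 1, φ r) = G 1 - G a := by
    intro a ha
    rw [← intervalIntegral.integral_of_le ha.2]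
    exact intervalIntegral.integral_eq_sub_of_hasDeriv_right_of_le ha.2
      hG.continuousOn
      (fun x hx => (hd x ⟨lt_of_le_of_lt ha.1 hx.1, hx.2⟩).hasDerivWithinAt)
      (hφ.intervalIntegrable a 1)
  set μB := volume.restrict (ball (0:ℂ) 1) with hμB
  set ν := volume.restrict (Ioc (0:ℝ) 1) with hν
  haveI : IsFiniteMeasure ν := by
    constructor
    rw [hν, Measure.restrict_apply_univ]
    simp [Real.volume_Ioc]
  have hmh : AEStronglyMeasurable h μB := hc.aestronglyMeasurable measurableSet_ball
  set S : Set (ℂ × ℝ) := {q : ℂ × ℝ | ‖q.1‖ < q.2} with hS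
  have hSopen : IsOpen S := isOpen_lt (continuous_norm.comp continuous_fst) continuous_snd
  set Ψ : ℂ × ℝ → ℝ := S.indicator (fun q => φ q.2 * h q.1) with hΨ
  have hΨm : AEStronglyMeasurable Ψ (μB.prod ν) :=
    (((hφ.comp continuous_snd).aestronglyMeasurable).mul hmh.comp_fst).indicator hSopen.measurableSet
  have hintfst : Integrable (fun q : ℂ × ℝ => ‖h q.1‖) (μB.prod ν) := by
    rw [integrable_prod_iff hmh.norm.comp_fst]
    constructor
    · exact Filter.Eventually.of_forall fun z => by
        simpa using integrable_const (μ := ν) ‖h z‖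
    · simp only [norm_norm, MeasureTheory.integral_const, smul_eq_mul]
      exact (hint.norm.const_mul _)
  have hΨint : Integrable Ψ (μB.prod ν) := by
    refine Integrable.mono' (hintfst.const_mul C) hΨm ?_
    refine Filter.Eventually.of_forall fun q => ?_
    calc ‖Ψ q‖ ≤ ‖φ q.2 * h q.1‖ := norm_indicator_le_norm_self _ _
      _ = |φ q.2| * ‖h q.1‖ := by rw [norm_mul, Real.norm_eq_abs]
      _ ≤ C * ‖h q.1‖ := mul_le_mul_of_nonneg_right (hC _) (norm_nonneg _)
  have hswap : (∫ z, (∫ r, Ψ (z, r) ∂ν) ∂μB) = ∫ r, (∫ z, Ψ (z, r) ∂μB) ∂ν :=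
    integral_integral_swap hΨint
  have hL : (∫ z, (∫ r, Ψ (z, r) ∂ν) ∂μB)
      = ∫ z, (G 1 - G (‖z‖)) * h z ∂μB := by
    rw [hμB]
    refine setIntegral_congr_fun measurableSet_ball fun z hz => ?_
    have hz1 : ‖z‖ < 1 := by
      exact mem_ball_zero_iff.mp hz
    have hz0 : (0:ℝ) ≤ ‖z‖ := norm_nonneg z
    have e1 : (fun r : ℝ => Ψ (z, r))
        = (Ioi (‖z‖)).indicator (fun r => φ r * h z) := by
      funext r
      simp only [hΨ, hS, indicator_apply, mem_setOf_eq, mem_Ioi]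
    rw [hν]
    calc (∫ r in Ioc (0:ℝ) 1, Ψ (z, r))
        = ∫ r in Ioc (0:ℝ) 1, (Ioi (‖z‖)).indicator (fun r => φ r * h z) r := by
          rw [e1]
      _ = ∫ r in Ioc (0:ℝ) 1 ∩ Ioi (‖z‖), φ r * h z :=
          setIntegral_indicator measurableSet_Ioi
      _ = ∫ r in Ioc (‖z‖) 1, φ r * h z := by
          have hset : Ioc (0:ℝ) 1 ∩ Ioi (‖z‖) = Ioc (‖z‖) 1 := by
            ext r
            simp only [mem_inter_iff, mem_Ioc, mem_Ioi]
            constructor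
            · rintro ⟨⟨_, h2⟩, h3⟩; exact ⟨h3, h2⟩
            · rintro ⟨h1, h2⟩; exact ⟨⟨lt_of_le_of_lt hz0 h1, h2⟩, h1⟩
          rw [hset]
      _ = (∫ r in Ioc (‖z‖) 1, φ r) * h z := by rw [MeasureTheory.integral_mul_const]
      _ = (G 1 - G (‖z‖)) * h z := by rw [ftc _ ⟨hz0, hz1.le⟩]
  have hR : (∫ r, (∫ z, Ψ (z, r) ∂μB) ∂ν)
      = ∫ r, (φ r * ∫ z in ball (0:ℂ) r, h z) ∂ν := by
    rw [hν]
    refine setIntegral_congr_fun measurableSet_Ioc fun r hr => ?_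
    have e2 : (fun z : ℂ => Ψ (z, r)) = (ball (0:ℂ) r).indicator (fun z => φ r * h z) := by
      funext z
      have hmem : z ∈ ball (0:ℂ) r ↔ ‖z‖ < r := by
        rw [mem_ball_zero_iff]
      by_cases hzr : ‖z‖ < r
      · calc Ψ (z, r) = φ r * h z := indicator_of_mem (show (z, r) ∈ S from hzr) _
          _ = (ball (0:ℂ) r).indicator (fun z => φ r * h z) z :=
            (indicator_of_mem (hmem.mpr hzr) (fun z => φ r * h z)).symm
      · calc Ψ (z, r) = 0 := indicator_of_notMem (show (z, r) ∉ S from hzr) _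
          _ = (ball (0:ℂ) r).indicator (fun z => φ r * h z) z :=
            (indicator_of_notMem (fun hm => hzr (hmem.mp hm)) (fun z => φ r * h z)).symm
    rw [hμB]
    calc (∫ z in ball (0:ℂ) 1, Ψ (z, r))
        = ∫ z in ball (0:ℂ) 1, (ball (0:ℂ) r).indicator (fun z => φ r * h z) z := by rw [e2]
      _ = ∫ z in ball (0:ℂ) 1 ∩ ball (0:ℂ) r, φ r * h z :=
          setIntegral_indicator measurableSet_ball
      _ = ∫ z in ball (0:ℂ) r, φ r * h z := by
          rw [inter_eq_self_of_subset_right (ball_subset_ball hr.2)]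
      _ = φ r * ∫ z in ball (0:ℂ) r, h z := integral_const_mul _ _
  have hb0 : Integrable (fun z => G 1 * h z) μB := hint.const_mul _
  have hb1 : Integrable (fun z => (G 1 - G (‖z‖)) * h z) μB := by
    refine Integrable.bdd_mul (c := CG + CG) hint
      ((continuous_const.sub (hG.comp continuous_norm)).aestronglyMeasurable) ?_
    refine Filter.Eventually.of_forall fun z => ?_
    rw [Real.norm_eq_abs]
    calc |G 1 - G (‖z‖)| ≤ |G 1| + |G (‖z‖)| := abs_sub _ _
      _ ≤ CG + CG := add_le_add (hCG 1) (hCG _)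
  have step : (∫ z, G (‖z‖) * h z ∂μB)
      = (∫ z, G 1 * h z ∂μB) - ∫ z, (G 1 - G (‖z‖)) * h z ∂μB := by
    rw [← integral_sub hb0 hb1]
    congr 1
    funext z
    ring
  rw [step, ← hL, hswap, hR, MeasureTheory.integral_const_mul]

/-- Integration-by-parts identity: for `g` continuously
differentiable on `[0,1]` and `f` holomorphic on the unit disk with
`∫_𝔻 |f′|² dA = π`,
`∫_𝔻 g(|z|)²|f′|² dA − ∫_𝔻 g(|z|)² dA
   = ∫₀¹ 2 g g′ (π r² − ∫_{D(r)} |f′|² dA) dr`. -/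
theorem radial_integration_by_parts
    (g g' : ℝ → ℝ)
    (hg : ∀ r ∈ Icc (0:ℝ) 1, HasDerivWithinAt g (g' r) (Icc (0:ℝ) 1) r)
    (hg' : ContinuousOn g' (Icc (0:ℝ) 1))
    (f : ℂ → ℂ) (hf : DifferentiableOn ℂ f (ball (0:ℂ) 1))
    (harea : (∫ z in ball (0:ℂ) 1, (‖deriv f z‖)^2) = π) :
    (∫ z in ball (0:ℂ) 1, (g (‖z‖))^2 * (‖deriv f z‖)^2)
      - (∫ z in ball (0:ℂ) 1, (g (‖z‖))^2)
    = ∫ r in (0:ℝ)..1, 2 * g r * g' r *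
        (π * r^2 - ∫ z in ball (0:ℂ) r, (‖deriv f z‖)^2) := by
  have hgc : ContinuousOn g (Icc (0:ℝ) 1) := fun x hx => (hg x hx).continuousWithinAt
  -- a continuous projection onto [0,1]
  have hpc : Continuous (fun x : ℝ => min 1 (max 0 x)) :=
    continuous_const.min (continuous_const.max continuous_id)
  have hpmem : ∀ x : ℝ, min 1 (max 0 x) ∈ Icc (0:ℝ) 1 :=
    fun x => ⟨le_min zero_le_one (le_max_left 0 x), min_le_left _ _⟩
  have hpeq : ∀ x ∈ Icc (0:ℝ) 1, min 1 (max 0 x) = x := fun x hx => by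
    rw [max_eq_right hx.1, min_eq_right hx.2]
  -- globally defined versions of g, g'
  set g0 : ℝ → ℝ := fun x => g (min 1 (max 0 x)) with hg0_def
  set g0' : ℝ → ℝ := fun x => g' (min 1 (max 0 x)) with hg0'_def
  have hg0c : Continuous g0 := hgc.comp_continuous hpc hpmem
  have hg0'c : Continuous g0' := hg'.comp_continuous hpc hpmem
  have hg0eq : ∀ x ∈ Icc (0:ℝ) 1, g0 x = g x := fun x hx => by
    simp only [hg0_def]; rw [hpeq x hx]
  have hg0'eq : ∀ x ∈ Icc (0:ℝ) 1, g0' x = g' x := fun x hx => by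
    simp only [hg0'_def]; rw [hpeq x hx]
  set G : ℝ → ℝ := fun x => g0 x ^ 2 with hG_def
  set φ : ℝ → ℝ := fun x => 2 * g0 x * g0' x with hφ_def
  have hGc : Continuous G := hg0c.pow 2
  have hφc : Continuous φ := (continuous_const.mul hg0c).mul hg0'c
  -- global bounds
  obtain ⟨Cφ, hCφ⟩ := isCompact_Icc.exists_bound_of_continuousOn
    (hφc.continuousOn : ContinuousOn φ (Icc (0:ℝ) 1))
  have hφp : ∀ x : ℝ, φ x = φ (min 1 (max 0 x)) := fun x => by
    simp only [hφ_def, hg0_def, hg0'_def]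
    rw [hpeq (min 1 (max 0 x)) (hpmem x)]
  have hCφ' : ∀ x, |φ x| ≤ Cφ := fun x => by
    rw [hφp x, ← Real.norm_eq_abs]
    exact hCφ _ (hpmem x)
  obtain ⟨CG, hCG⟩ := isCompact_Icc.exists_bound_of_continuousOn
    (hGc.continuousOn : ContinuousOn G (Icc (0:ℝ) 1))
  have hGp : ∀ x : ℝ, G x = G (min 1 (max 0 x)) := fun x => by
    simp only [hG_def, hg0_def]
    rw [hpeq (min 1 (max 0 x)) (hpmem x)]
  have hCG' : ∀ x, |G x| ≤ CG := fun x => by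
    rw [hGp x, ← Real.norm_eq_abs]
    exact hCG _ (hpmem x)
  -- derivative of G
  have hd : ∀ x ∈ Ioo (0:ℝ) 1, HasDerivAt G (φ x) x := by
    intro x hx
    have hx' : x ∈ Icc (0:ℝ) 1 := Ioo_subset_Icc_self hx
    have h1 : HasDerivWithinAt g0 (g0' x) (Icc (0:ℝ) 1) x := by
      have h2 := (hg x hx').congr (fun y hy => hg0eq y hy) (hg0eq x hx')
      rwa [← hg0'eq x hx'] at h2
    have h3 : HasDerivAt g0 (g0' x) x := h1.hasDerivAt (Icc_mem_nhds hx.1 hx.2)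
    have h4 := h3.pow 2
    have : ((2:ℕ):ℝ) * g0 x ^ (2 - 1) * g0' x = φ x := by
      simp only [hφ_def]; push_cast; ring
    rw [this] at h4
    exact h4
  -- the weight |f'|^2
  have hderivc : ContinuousOn (deriv f) (ball (0:ℂ) 1) :=
    ((hf.analyticOnNhd isOpen_ball).deriv).continuousOn
  have hFc : ContinuousOn (fun z : ℂ => (‖deriv f z‖)^2) (ball (0:ℂ) 1) :=
    (continuous_norm.comp_continuousOn hderivc).pow 2
  have hFint : IntegrableOn (fun z : ℂ => (‖deriv f z‖)^2) (ball (0:ℂ) 1) := by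
    by_contra hcon
    rw [MeasureTheory.integral_undef hcon] at harea
    exact Real.pi_ne_zero harea.symm
  -- key lemma applied twice
  have key1 := key_radial G φ hGc hφc CG hCG' Cφ hCφ' hd
    (fun z : ℂ => (‖deriv f z‖)^2) hFc hFint
  have key2 := key_radial G φ hGc hφc CG hCG' Cφ hCφ' hd
    (fun _ : ℂ => (1:ℝ)) continuousOn_const
    (integrableOn_const measure_ball_lt_top.ne)
  -- areas
  have hπ : (∫ z in ball (0:ℂ) 1, (1:ℝ)) = π := by
    rw [setIntegral_const, smul_eq_mul, mul_one, measureReal_def, Complex.volume_ball]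
    rw [ENNReal.toReal_mul, ENNReal.toReal_pow, ENNReal.toReal_ofReal zero_le_one,
      ENNReal.coe_toReal, NNReal.coe_real_pi]
    ring
  have harea2 : ∀ r ∈ Ioc (0:ℝ) 1, (∫ z in ball (0:ℂ) r, (1:ℝ)) = π * r^2 := by
    intro r hr
    rw [setIntegral_const, smul_eq_mul, mul_one, measureReal_def, Complex.volume_ball]
    rw [ENNReal.toReal_mul, ENNReal.toReal_pow, ENNReal.toReal_ofReal hr.1.le,
      ENNReal.coe_toReal, NNReal.coe_real_pi]
    ring
  rw [harea] at key1
  rw [hπ] at key2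
  have e3 : (∫ r in Ioc (0:ℝ) 1, φ r * ∫ z in ball (0:ℂ) r, (1:ℝ))
      = ∫ r in Ioc (0:ℝ) 1, φ r * (π * r^2) :=
    setIntegral_congr_fun measurableSet_Ioc fun r hr => by rw [harea2 r hr]
  rw [e3] at key2
  -- rewrite the left-hand side
  have lhs1 : (∫ z in ball (0:ℂ) 1, (g (‖z‖))^2 * (‖deriv f z‖)^2)
      = ∫ z in ball (0:ℂ) 1, G (‖z‖) * (‖deriv f z‖)^2 := by
    refine setIntegral_congr_fun measurableSet_ball fun z hz => ?_
    have hzm : ‖z‖ ∈ Icc (0:ℝ) 1 := by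
      refine ⟨norm_nonneg z, ?_⟩
      exact (mem_ball_zero_iff.mp hz).le
    simp only [hG_def]
    rw [hg0eq _ hzm]
  have lhs2 : (∫ z in ball (0:ℂ) 1, (g (‖z‖))^2)
      = ∫ z in ball (0:ℂ) 1, G (‖z‖) * 1 := by
    refine setIntegral_congr_fun measurableSet_ball fun z hz => ?_
    have hzm : ‖z‖ ∈ Icc (0:ℝ) 1 := by
      refine ⟨norm_nonneg z, ?_⟩
      exact (mem_ball_zero_iff.mp hz).le
    simp only [hG_def, mul_one]
    rw [hg0eq _ hzm]
  -- rewrite the right-hand side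
  have rhs1 : (∫ r in (0:ℝ)..1, 2 * g r * g' r *
        (π * r^2 - ∫ z in ball (0:ℂ) r, (‖deriv f z‖)^2))
      = ∫ r in Ioc (0:ℝ) 1, φ r *
        (π * r^2 - ∫ z in ball (0:ℂ) r, (‖deriv f z‖)^2) := by
    rw [intervalIntegral.integral_of_le zero_le_one]
    refine setIntegral_congr_fun measurableSet_Ioc fun r hr => ?_
    have hr' : r ∈ Icc (0:ℝ) 1 := Ioc_subset_Icc_self hr
    simp only [hφ_def]
    rw [hg0eq r hr', hg0'eq r hr']
  -- integrability for splitting the right-hand side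
  have intA : IntegrableOn (fun r : ℝ => φ r * (π * r^2)) (Ioc (0:ℝ) 1) :=
    (hφc.mul (continuous_const.mul (continuous_pow 2))).integrableOn_Ioc
  have hmono : MonotoneOn (fun r : ℝ => ∫ z in ball (0:ℂ) r, (‖deriv f z‖)^2)
      (Icc (0:ℝ) 1) := by
    intro a ha b hb hab
    refine setIntegral_mono_set (hFint.mono_set (ball_subset_ball hb.2)) ?_ ?_
    · exact Filter.Eventually.of_forall fun z => sq_nonneg _
    · exact HasSubset.Subset.eventuallyLE (ball_subset_ball hab)
  have intB : IntegrableOn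
      (fun r : ℝ => φ r * ∫ z in ball (0:ℂ) r, (‖deriv f z‖)^2) (Ioc (0:ℝ) 1) := by
    refine Integrable.bdd_mul (c := Cφ) ?_ hφc.aestronglyMeasurable
      (Filter.Eventually.of_forall fun x => by rw [Real.norm_eq_abs]; exact hCφ' x)
    exact (hmono.integrableOn_isCompact isCompact_Icc).mono_set Ioc_subset_Icc_self
  have split : (∫ r in Ioc (0:ℝ) 1, φ r *
        (π * r^2 - ∫ z in ball (0:ℂ) r, (‖deriv f z‖)^2))
      = (∫ r in Ioc (0:ℝ) 1, φ r * (π * r^2))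
        - ∫ r in Ioc (0:ℝ) 1, φ r * ∫ z in ball (0:ℂ) r, (‖deriv f z‖)^2 := by
    rw [← integral_sub intA intB]
    refine setIntegral_congr_fun measurableSet_Ioc fun r _ => ?_
    ring
  rw [lhs1, lhs2, key1, key2, rhs1, split]
  ring
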